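/- For the Weyl module Δ_q(i) with basis m_0,…,m_i and action F^{(n)} m_k = [k+n choose n]_q m_{k+n}, E^{(n)} m_k = [i-k+n choose n]_q m_{k-n}, and with e = E^{(ℓ)}, f = F^{(ℓ)}, one has e^n f^n m_k = (∏_{u=1}^{n} [k+uℓ choose ℓ]_q [i-k+(1-u)ℓ choose ℓ]_q) m_k; moreover, if d = i - 2k satisfies |d - 2nℓ| ≤ |d|, this coefficient is nonzero, so e^n f^n acts as a ℂ-linear automorphism of the H-eigenspace of eigenvalue d (which is spanned by m_k). -/

import Mathlib

/-- The balanced Gaussian binomial coefficient. -/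
noncomputable def gB (q : ℂ) : ℕ → ℕ → ℂ
  | _, 0 => 1
  | 0, _ + 1 => 0
  | m + 1, n + 1 => q ^ (-((n : ℤ) + 1)) * gB q m (n + 1) + q ^ ((m : ℤ) - n) * gB q m n

/-- Action of `E^{(n)}` on the Weyl module `Δ_q(i)`. -/
noncomputable def Eop (q : ℂ) (i n : ℕ) (v : ℤ → ℂ) : ℤ → ℂ :=
  fun k => if 0 ≤ k ∧ k ≤ (i : ℤ) then gB q ((i : ℤ) - k).toNat n * v (k + n) else 0

/-- Action of `F^{(n)}` on the Weyl module `Δ_q(i)`. -/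
noncomputable def Fop (q : ℂ) (i n : ℕ) (v : ℤ → ℂ) : ℤ → ℂ :=
  fun k => if 0 ≤ k ∧ k ≤ (i : ℤ) then gB q k.toNat n * v (k - n) else 0

/-- The basis vector `m_k` of the Weyl module (as a coefficient function). -/
noncomputable def delta (k : ℤ) : ℤ → ℂ := fun j => if j = k then 1 else 0

/-- On `Δ_q(i)`, with `e = E^{(ℓ)}`, `f = F^{(ℓ)}`:
`e^n f^n m_k = (∏_{u=1}^{n} [k+uℓ choose ℓ]_q [i-k+(1-u)ℓ choose ℓ]_q) m_k`, and this
coefficient is nonzero when `|d - 2nℓ| ≤ |d|` for `d = i - 2k`, so `e^n f^n` is an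
automorphism of the (one-dimensional) `H`-eigenspace of eigenvalue `d`. -/
lemma gB_zero (q : ℂ) (n : ℕ) : gB q 0 (n+1) = 0 := by simp [gB]
lemma gB_succ (q : ℂ) (m n : ℕ) : gB q (m+1) (n+1) =
    q ^ (-((n : ℤ) + 1)) * gB q m (n + 1) + q ^ ((m : ℤ) - n) * gB q m n := by
  rw [gB]

lemma gB_of_lt (q : ℂ) : ∀ m n, m < n → gB q m n = 0 := by
  intro m
  induction m with
  | zero => intro n h; cases n with | zero => omega | succ n => simp [gB]
  | succ m ih =>
    intro n h
    cases n with
    | zero => omega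
    | succ n => rw [gB_succ, ih (n+1) (by omega), ih n (by omega)]; ring

lemma gB_self (q : ℂ) : ∀ m, gB q m m = 1 := by
  intro m
  induction m with
  | zero => simp [gB]
  | succ m ih =>
    rw [gB_succ, ih, gB_of_lt q m (m+1) (by omega)]
    simp

noncomputable def br (q : ℂ) (j : ℕ) : ℂ := q ^ (j : ℤ) - q ^ (-(j : ℤ))

lemma prod_Icc_bot {M : Type*} [CommMonoid M] (f : ℕ → M) {a b : ℕ} (h : a ≤ b) :
    ∏ j ∈ Finset.Icc a b, f j = f a * ∏ j ∈ Finset.Icc (a+1) b, f j := by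
  rw [Finset.Icc_eq_cons_Ioc h, Finset.prod_cons, Finset.Icc_add_one_left_eq_Ioc]

lemma key (q : ℂ) (hq0 : q ≠ 0) (a b : ℤ) :
    q^(-(b+1)) * (q^a - q^(-a)) + q^a * (q^(b+1) - q^(-(b+1))) =
      q^(a+b+1) - q^(-(a+b+1)) := by
  simp only [mul_sub, ← zpow_add₀ hq0]
  ring_nf

lemma gB_mul (q : ℂ) (hq0 : q ≠ 0) : ∀ m n, n ≤ m →
    gB q m n * ∏ j ∈ Finset.Icc 1 n, br q j = ∏ j ∈ Finset.Icc (m-n+1) m, br q j := by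
  intro m
  induction m with
  | zero => intro n h; interval_cases n; simp [gB]
  | succ m ih =>
    intro n h
    cases n with
    | zero => simp [gB]
    | succ n =>
      have hmn : m + 1 - (n+1) + 1 = m - n + 1 := by omega
      rw [gB_succ, Finset.prod_Icc_succ_top (show 1 ≤ n+1 by omega), hmn,
        Finset.prod_Icc_succ_top (show m-n+1 ≤ m+1 by omega)]
      rcases Nat.lt_or_ge n m with hnm | hnm
      · have ih1 := ih (n+1) (by omega)
        have ih2 := ih n (by omega)
        rw [show m - (n+1) + 1 = m - n by omega] at ih1
        rw [prod_Icc_bot _ (by omega : m - n ≤ m), show m - n + 1 = m - n + 1 from rfl] at ih1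
        rw [Finset.prod_Icc_succ_top (show 1 ≤ n+1 by omega)] at ih1
        have hb : br q (m+1) = q^(-((n:ℤ)+1)) * br q (m-n) + q^((m:ℤ)-n) * br q (n+1) := by
          have hc : ((m - n : ℕ) : ℤ) = (m : ℤ) - n := by omega
          rw [br, br, br, hc]
          have := key q hq0 ((m:ℤ)-n) n
          rw [show (m:ℤ)-n+n+1 = (m:ℤ)+1 by ring] at this
          push_cast
          exact this.symm
        rw [hb]
        calc (q ^ (-((n:ℤ) + 1)) * gB q m (n + 1) + q ^ ((m:ℤ) - ↑n) * gB q m n) *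
              ((∏ j ∈ Finset.Icc 1 n, br q j) * br q (n + 1))
            = q ^ (-((n:ℤ) + 1)) * (gB q m (n+1) * ((∏ j ∈ Finset.Icc 1 n, br q j) * br q (n+1)))
              + q ^ ((m:ℤ) - n) * (gB q m n * ∏ j ∈ Finset.Icc 1 n, br q j) * br q (n+1) := by ring
          _ = q ^ (-((n:ℤ) + 1)) * (br q (m-n) * ∏ j ∈ Finset.Icc (m-n+1) m, br q j)
              + q ^ ((m:ℤ) - n) * (∏ j ∈ Finset.Icc (m-n+1) m, br q j) * br q (n+1) := by
              rw [ih1, ih2]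
          _ = (∏ j ∈ Finset.Icc (m-n+1) m, br q j) *
              (q ^ (-((n:ℤ)+1)) * br q (m-n) + q^((m:ℤ)-n) * br q (n+1)) := by ring
      · have hn : n = m := by omega
        subst hn
        rw [gB_of_lt q n (n+1) (by omega), gB_self, show (n:ℤ) - n = 0 by ring]
        simp [show n - n + 1 = 1 by omega]

section
variable {q : ℂ} {ℓ : ℕ} (hq0 : q ≠ 0) (hℓ : 2 ≤ ℓ) (hq : IsPrimitiveRoot (q ^ 2) ℓ)
include hq0 hℓ hq

lemma q2l : q ^ (2 * (ℓ:ℤ)) = 1 := by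
  have := hq.pow_eq_one
  rw [← pow_mul] at this
  rw [show 2 * (ℓ:ℤ) = ((2*ℓ : ℕ) : ℤ) by push_cast; ring, zpow_natCast]
  exact this

lemma zpow_congr {a b : ℤ} (h : 2 * (ℓ:ℤ) ∣ (a - b)) : q ^ a = q ^ b := by
  obtain ⟨c, hc⟩ := h
  have : a = b + 2 * (ℓ:ℤ) * c := by linarith
  rw [this, zpow_add₀ hq0, zpow_mul, q2l hq0 hℓ hq, one_zpow, mul_one]

lemma br_ell : br q ℓ = 0 := by
  have h1 : q ^ ((ℓ:ℤ)) = q ^ (-(ℓ:ℤ)) := zpow_congr hq0 hℓ hq ⟨1, by ring⟩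
  rw [br, h1, sub_self]

lemma br_ne {j : ℕ} (h1 : 1 ≤ j) (h2 : j < ℓ) : br q j ≠ 0 := by
  have h3 : (q^2)^j ≠ 1 := hq.pow_ne_one_of_pos_of_lt (by omega) h2
  have : br q j = q ^ (-(j:ℤ)) * ((q^2)^j - 1) := by
    rw [br, mul_sub, mul_one, ← pow_mul, ← zpow_natCast q (2*j), ← zpow_add₀ hq0]
    congr 2
    push_cast; ring
  rw [this]
  exact mul_ne_zero (zpow_ne_zero _ hq0) (sub_ne_zero.2 h3)

lemma prod_br_ne {s : ℕ} (hs : s < ℓ) : (∏ j ∈ Finset.Icc 1 s, br q j) ≠ 0 := by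
  rw [Finset.prod_ne_zero_iff]
  intro j hj
  rw [Finset.mem_Icc] at hj
  exact br_ne hq0 hℓ hq hj.1 (by omega)

lemma gB_ell_lt {s : ℕ} (hs1 : 1 ≤ s) (hs : s < ℓ) : gB q ℓ s = 0 := by
  have h := gB_mul q hq0 ℓ s (by omega)
  have hz : (∏ j ∈ Finset.Icc (ℓ-s+1) ℓ, br q j) = 0 :=
    Finset.prod_eq_zero (Finset.mem_Icc.2 ⟨by omega, le_refl ℓ⟩) (br_ell hq0 hℓ hq)
  rw [hz] at h
  rcases mul_eq_zero.1 h with h' | h'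
  · exact h'
  · exact absurd h' (prod_br_ne hq0 hℓ hq hs)

lemma gB_shift : ∀ m n, n < ℓ → gB q (m + ℓ) n = q ^ (-((n:ℤ) * ℓ)) * gB q m n := by
  intro m
  induction m with
  | zero =>
    intro n hn
    cases n with
    | zero => simp [gB]
    | succ n => rw [zero_add, gB_ell_lt hq0 hℓ hq (by omega) hn]; simp [gB]
  | succ m ih =>
    intro n hn
    cases n with
    | zero => simp [gB]
    | succ n =>
      rw [show m + 1 + ℓ = (m + ℓ) + 1 by omega, gB_succ, gB_succ,
        ih (n+1) hn, ih n (by omega), mul_add]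
      congr 1
      · ring
      · rw [← mul_assoc, ← mul_assoc, ← zpow_add₀ hq0, ← zpow_add₀ hq0]
        congr 1
        exact zpow_congr hq0 hℓ hq ⟨1, by push_cast; ring⟩

lemma gB_mod : ∀ m n, n < ℓ →
    gB q m n = q ^ (-((n:ℤ) * ℓ * (m / ℓ : ℕ))) * gB q (m % ℓ) n := by
  intro m
  induction m using Nat.strong_induction_on with
  | _ m ih =>
    intro n hn
    rcases Nat.lt_or_ge m ℓ with h | h
    · rw [Nat.mod_eq_of_lt h, Nat.div_eq_of_lt h]
      simp
    · have hm : m = (m - ℓ) + ℓ := by omega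
      rw [hm, Nat.add_div_right _ (show 0 < ℓ by omega), Nat.add_mod_right,
        gB_shift hq0 hℓ hq _ n hn, ih (m - ℓ) (by omega) n hn,
        ← mul_assoc, ← zpow_add₀ hq0]
      congr 1
      push_cast
      ring

lemma gB_ell_formula : ∀ m, gB q m ℓ = ((m / ℓ : ℕ) : ℂ) * q ^ ((ℓ:ℤ) * ((ℓ:ℤ) - m)) := by
  intro m
  induction m with
  | zero =>
    obtain ⟨s, hs⟩ : ∃ s, ℓ = s + 2 := ⟨ℓ - 2, by omega⟩
    rw [Nat.div_eq_of_lt (by omega), hs]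
    simp [gB]
  | succ m ih =>
    obtain ⟨s, hs⟩ : ∃ s, ℓ = s + 1 := ⟨ℓ - 1, by omega⟩
    have hrm := Nat.div_add_mod m ℓ
    have hrlt : m % ℓ < ℓ := Nat.mod_lt _ (by omega)
    set a := m / ℓ with ha
    set r := m % ℓ with hr
    have hstep : gB q (m+1) ℓ =
        q ^ (-((s : ℤ) + 1)) * gB q m ℓ + q ^ ((m : ℤ) - s) * gB q m s := by
      rw [hs, gB_succ, ← hs]
    have hmod := gB_mod hq0 hℓ hq m s (by omega)
    rcases Nat.lt_or_ge r s with hcase | hcase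
    · -- r < s : second term vanishes, division unchanged
      have hdiv : (m+1) / ℓ = a := by
        have : m + 1 = ℓ * a + (r + 1) := by omega
        rw [this, Nat.mul_add_div (by omega), Nat.div_eq_of_lt (by omega)]
        omega
      have h0 : gB q r s = 0 := gB_of_lt q r s hcase
      rw [hstep, hmod, ← hr, h0, mul_zero, mul_zero, add_zero, ih, hdiv]
      have e1 : q ^ ((ℓ:ℤ) * ((ℓ:ℤ) - (m+1:ℕ))) =
          q ^ (-((s:ℤ)+1)) * q ^ ((ℓ:ℤ)*((ℓ:ℤ)-(m:ℕ))) := by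
        rw [← zpow_add₀ hq0]
        congr 1
        have : (ℓ:ℤ) = (s:ℤ) + 1 := by omega
        rw [this]; push_cast; ring
      rw [e1]; ring
    · -- r = s
      have hrs : r = s := by omega
      have hdiv : (m+1) / ℓ = a + 1 := by
        have : m + 1 = ℓ * (a + 1) := by rw [Nat.mul_add, Nat.mul_one]; omega
        rw [this, Nat.mul_div_cancel_left _ (show 0 < ℓ by omega)]
      have h1 : gB q r s = 1 := by rw [hrs]; exact gB_self q s
      rw [hstep, hmod, ← hr, h1, mul_one, ih, hdiv]
      have e1 : q ^ ((ℓ:ℤ) * ((ℓ:ℤ) - (m+1:ℕ))) =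
          q ^ (-((s:ℤ)+1)) * q ^ ((ℓ:ℤ)*((ℓ:ℤ)-(m:ℕ))) := by
        rw [← zpow_add₀ hq0]
        congr 1
        have : (ℓ:ℤ) = (s:ℤ) + 1 := by omega
        rw [this]; push_cast; ring
      have e2 : q ^ ((m:ℤ) - s) * q ^ (-((s:ℤ) * ℓ * a)) =
          q ^ ((ℓ:ℤ) * ((ℓ:ℤ) - (m+1:ℕ))) := by
        rw [← zpow_add₀ hq0]
        apply zpow_congr hq0 hℓ hq
        refine ⟨(a : ℤ), ?_⟩
        have h1 : (m:ℤ) = ℓ * a + s := by omega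
        have h2 : (ℓ:ℤ) = (s:ℤ) + 1 := by omega
        push_cast
        rw [h1, h2]; ring
      rw [← mul_assoc, e2, e1]
      push_cast
      ring
  
lemma gB_ell_ne {m : ℕ} (h : ℓ ≤ m) : gB q m ℓ ≠ 0 := by
  rw [gB_ell_formula hq0 hℓ hq]
  apply mul_ne_zero
  · simp only [ne_eq, Nat.cast_eq_zero]
    have : 1 ≤ m / ℓ := (Nat.one_le_div_iff (by omega)).2 h
    omega
  · exact zpow_ne_zero _ hq0

end

section
variable (q : ℂ) (ℓ i : ℕ)

lemma Fop_zero : Fop q i ℓ (fun _ => 0) = fun _ => 0 := by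
  funext j; simp [Fop]

lemma Eop_zero : Eop q i ℓ (fun _ => 0) = fun _ => 0 := by
  funext j; simp [Eop]

lemma Fop_sd (c : ℂ) (t : ℤ) (ht0 : 0 ≤ t) :
    Fop q i ℓ (fun j => c * delta t j) =
      if t + ℓ ≤ (i:ℤ) then (fun j => (gB q (t + ℓ).toNat ℓ * c) * delta (t + ℓ) j)
      else fun _ => 0 := by
  by_cases hti : t + ℓ ≤ (i:ℤ)
  · rw [if_pos hti]
    funext j
    simp only [Fop, delta]
    by_cases hj : j = t + ℓ
    · subst hj
      rw [if_pos ⟨by omega, hti⟩, if_pos (show t + (ℓ:ℤ) - ℓ = t by ring), if_pos rfl]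
      ring
    · rw [if_neg (show ¬ (j - (ℓ:ℤ) = t) by omega), if_neg hj]
      by_cases hb : 0 ≤ j ∧ j ≤ (i:ℤ)
      · rw [if_pos hb]; ring
      · rw [if_neg hb]; ring
  · rw [if_neg hti]
    funext j
    simp only [Fop, delta]
    by_cases hb : 0 ≤ j ∧ j ≤ (i:ℤ)
    · rw [if_pos hb, if_neg (show ¬ (j - (ℓ:ℤ) = t) by omega)]; ring
    · rw [if_neg hb]

lemma Eop_sd (c : ℂ) (t : ℤ) (h0 : 0 ≤ t - ℓ) (hti : t ≤ (i:ℤ)) :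
    Eop q i ℓ (fun j => c * delta t j) =
      fun j => (gB q ((i:ℤ) - (t - ℓ)).toNat ℓ * c) * delta (t - ℓ) j := by
  funext j
  simp only [Eop, delta]
  by_cases hj : j = t - ℓ
  · subst hj
    rw [if_pos ⟨by omega, by omega⟩, if_pos (show t - (ℓ:ℤ) + ℓ = t by ring), if_pos rfl]
    ring
  · rw [if_neg hj]
    by_cases hb : 0 ≤ j ∧ j ≤ (i:ℤ)
    · rw [if_pos hb, if_neg (show ¬ (j + (ℓ:ℤ) = t) by omega)]; ring
    · rw [if_neg hb]; ring

variable {k : ℤ}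

lemma Fn (hk0 : 0 ≤ k) (hki : k ≤ (i:ℤ)) : ∀ n : ℕ,
    (Fop q i ℓ)^[n] (delta k) =
      if k + (n:ℤ) * ℓ ≤ (i:ℤ) then
        (fun j => (∏ u ∈ Finset.Icc 1 n, gB q (k + (u:ℤ) * ℓ).toNat ℓ) *
          delta (k + (n:ℤ) * ℓ) j)
      else fun _ => 0 := by
  intro n
  induction n with
  | zero =>
    rw [if_pos (by push_cast; omega)]
    funext j
    simp
  | succ n ih =>
    have hl0 : (0:ℤ) ≤ (ℓ:ℤ) := Int.ofNat_nonneg ℓ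
    have hMnn : (0:ℤ) ≤ (n:ℤ) * ℓ := by positivity
    have hM : ((n+1:ℕ):ℤ) * ℓ = (n:ℤ) * ℓ + ℓ := by push_cast; ring
    rw [Function.iterate_succ_apply', ih]
    by_cases hc : k + ((n+1 : ℕ):ℤ) * ℓ ≤ (i:ℤ)
    · rw [hM] at hc
      have hc' : k + (n:ℤ) * ℓ ≤ (i:ℤ) := by linarith
      rw [if_pos hc', if_pos (by rw [hM]; linarith), Fop_sd q ℓ i _ _ (by linarith),
        if_pos (show k + (n:ℤ)*ℓ + ℓ ≤ (i:ℤ) by linarith)]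
      have ht : k + (n:ℤ) * ℓ + ℓ = k + ((n+1:ℕ):ℤ) * ℓ := by push_cast; ring
      rw [ht, Finset.prod_Icc_succ_top (by omega)]
      funext j
      push_cast
      ring
    · rw [hM] at hc
      have h2 : ¬ (k + ((n+1:ℕ):ℤ) * ℓ ≤ (i:ℤ)) := by rw [hM]; exact hc
      by_cases hc' : k + (n:ℤ) * ℓ ≤ (i:ℤ)
      · rw [if_pos hc', Fop_sd q ℓ i _ _ (by linarith),
          if_neg (show ¬ (k + (n:ℤ)*ℓ + ℓ ≤ (i:ℤ)) by intro h; exact hc (by linarith)),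
          if_neg h2]
      · rw [if_neg hc', Fop_zero, if_neg h2]

lemma En (hk0 : 0 ≤ k) : ∀ (n : ℕ) (c : ℂ), k + (n:ℤ) * ℓ ≤ (i:ℤ) →
    (Eop q i ℓ)^[n] (fun j => c * delta (k + (n:ℤ) * ℓ) j) =
      fun j => ((∏ u ∈ Finset.Icc 1 n, gB q ((i:ℤ) - k + (1 - (u:ℤ)) * ℓ).toNat ℓ) * c) *
        delta k j := by
  intro n
  induction n with
  | zero =>
    intro c _
    funext j
    simp
  | succ n ih =>
    intro c hc
    have hl0 : (0:ℤ) ≤ (ℓ:ℤ) := Int.ofNat_nonneg ℓ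
    have hMnn : (0:ℤ) ≤ (n:ℤ) * ℓ := by positivity
    have hM : ((n+1:ℕ):ℤ) * ℓ = (n:ℤ) * ℓ + ℓ := by push_cast; ring
    rw [hM] at hc
    rw [Function.iterate_succ_apply,
      Eop_sd q ℓ i c _ (by rw [hM]; linarith) (by rw [hM]; linarith)]
    have ht : k + ((n+1:ℕ):ℤ) * ℓ - ℓ = k + (n:ℤ) * ℓ := by push_cast; ring
    rw [ht, ih _ (by linarith), Finset.prod_Icc_succ_top (by omega)]
    funext j
    have he : (i:ℤ) - (k + (n:ℤ) * ℓ) = (i:ℤ) - k + (1 - ((n+1:ℕ):ℤ)) * ℓ := by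
      push_cast; ring
    rw [he]
    ring
end


theorem weyl_enfn (q : ℂ) (ℓ i n : ℕ) (hq0 : q ≠ 0) (hℓ : 2 ≤ ℓ)
    (hq : IsPrimitiveRoot (q ^ 2) ℓ) (k : ℤ) (hk0 : 0 ≤ k) (hki : k ≤ (i : ℤ)) :
    ((Eop q i ℓ)^[n] ((Fop q i ℓ)^[n] (delta k)) =
      fun j => (∏ u ∈ Finset.Icc 1 n,
        gB q (k + (u : ℤ) * (ℓ : ℤ)).toNat ℓ *
          gB q ((i : ℤ) - k + (1 - (u : ℤ)) * (ℓ : ℤ)).toNat ℓ) * delta k j) ∧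
    (|(i : ℤ) - 2 * k - 2 * (n : ℤ) * (ℓ : ℤ)| ≤ |(i : ℤ) - 2 * k| →
      (∏ u ∈ Finset.Icc 1 n,
        gB q (k + (u : ℤ) * (ℓ : ℤ)).toNat ℓ *
          gB q ((i : ℤ) - k + (1 - (u : ℤ)) * (ℓ : ℤ)).toNat ℓ) ≠ 0) := by
  have hl0 : (0:ℤ) ≤ (ℓ:ℤ) := Int.ofNat_nonneg ℓ
  have hlpos : (0:ℤ) < (ℓ:ℤ) := by omega
  constructor
  · by_cases hc : k + (n:ℤ) * ℓ ≤ (i:ℤ)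
    · rw [Fn q ℓ i hk0 hki n, if_pos hc, En q ℓ i hk0 n _ hc]
      funext j
      rw [Finset.prod_mul_distrib]
      ring
    · rw [Fn q ℓ i hk0 hki n, if_neg hc, Function.iterate_fixed (Eop_zero q ℓ i) n]
      have hik : (0:ℤ) ≤ (i:ℤ) - k := by omega
      obtain ⟨d, hd, hdnn⟩ : ∃ d : ℤ, d = ((i:ℤ) - k) / ℓ ∧ 0 ≤ d :=
        ⟨_, rfl, Int.ediv_nonneg hik hl0⟩
      have hdm : (ℓ:ℤ) * d + ((i:ℤ) - k) % ℓ = (i:ℤ) - k := by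
        rw [hd]; exact Int.mul_ediv_add_emod _ _
      have h0le : 0 ≤ ((i:ℤ) - k) % ℓ := Int.emod_nonneg _ (by omega)
      have hlt : ((i:ℤ) - k) % ℓ < ℓ := Int.emod_lt_of_pos _ hlpos
      have hdn : d < n := by
        by_contra hnd
        push_neg at hnd
        have h1 : (ℓ:ℤ) * n ≤ (ℓ:ℤ) * d := mul_le_mul_of_nonneg_left hnd hl0
        push_neg at hc
        linarith
      obtain ⟨u₀, hu₀def⟩ : ∃ u₀ : ℕ, u₀ = d.toNat + 1 := ⟨_, rfl⟩
      have hu₀ : ((u₀:ℕ):ℤ) = d + 1 := by rw [hu₀def]; push_cast; omega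
      have harg : (i:ℤ) - k + (1 - (u₀:ℤ)) * ℓ = ((i:ℤ) - k) % ℓ := by
        rw [hu₀, Int.emod_def, ← hd]; ring
      have hfac : gB q (((i:ℤ) - k + (1 - (u₀:ℤ)) * ℓ).toNat) ℓ = 0 := by
        apply gB_of_lt
        rw [harg]
        have h2 := Int.toNat_of_nonneg h0le
        omega
      have hprod : (∏ u ∈ Finset.Icc 1 n,
          gB q (k + (u : ℤ) * (ℓ : ℤ)).toNat ℓ *
            gB q ((i : ℤ) - k + (1 - (u : ℤ)) * (ℓ : ℤ)).toNat ℓ) = 0 := by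
        exact Finset.prod_eq_zero (i := u₀) (Finset.mem_Icc.2 ⟨by omega, by omega⟩)
          (mul_eq_zero_of_right _ hfac)
      funext j
      rw [hprod, zero_mul]
  · intro habs
    rcases Nat.eq_zero_or_pos n with rfl | hn
    · simp
    · have hn1 : (1:ℤ) ≤ (n:ℤ) := by exact_mod_cast hn
      have hl2 : (2:ℤ) ≤ (ℓ:ℤ) := by exact_mod_cast hℓ
      have hB : (4:ℤ) ≤ 2 * (n:ℤ) * ℓ := by nlinarith
      have hnl : (n:ℤ) * ℓ ≤ (i:ℤ) - 2 * k := by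
        obtain ⟨h1, h2⟩ := abs_le.1 habs
        rcases abs_cases ((i:ℤ) - 2 * k) with ⟨he, _⟩ | ⟨he, _⟩ <;>
          rw [he] at h1 h2 <;> linarith
      rw [Finset.prod_ne_zero_iff]
      intro u hu
      rw [Finset.mem_Icc] at hu
      have hu1 : (1:ℤ) ≤ (u:ℤ) := by exact_mod_cast hu.1
      have hun : (u:ℤ) ≤ (n:ℤ) := by exact_mod_cast hu.2
      have hul1 : (ℓ:ℤ) ≤ (u:ℤ) * ℓ := le_mul_of_one_le_left (by omega) hu1
      have hul2 : (u:ℤ) * ℓ ≤ (n:ℤ) * ℓ := mul_le_mul_of_nonneg_right hun hl0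
      apply mul_ne_zero
      · apply gB_ell_ne hq0 hℓ hq
        have h1 : (ℓ:ℤ) ≤ k + (u:ℤ) * ℓ := by linarith
        omega
      · apply gB_ell_ne hq0 hℓ hq
        have h1 : (ℓ:ℤ) ≤ (i:ℤ) - k + (1 - (u:ℤ)) * ℓ := by nlinarith
        omega
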